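/- Lindström–Gessel–Viennot lemma: let N be a finite acyclic planar weighted directed graph with sources b_1,…,b_n followed by sinks c_1,…,c_n in order along the boundary, and let X be the n×n matrix with X_{ij} equal to the sum of weights of directed paths from b_i to c_j. Then det(X) equals the sum over all families (p_1,…,p_n) of pairwise vertex-disjoint paths with p_i from b_i to c_i of the product of the weights of the paths. -/

import Mathlib

/-- `l` is a directed path from `a` to `b` in the digraph with edge relation `E`:
consecutive vertices are joined by edges, it starts at `a`, ends at `b`, and (being a
path in an acyclic digraph) has no repeated vertices. -/
def IsPath {V : Type*} (E : V → V → Prop) (a b : V) (l : List V) : Prop :=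
  l.Chain' E ∧ l.head? = some a ∧ l.getLast? = some b ∧ l.Nodup

/-- The weight of a path: the product of the weights of its edges. -/
def pathWeight {V R : Type*} [CommRing R] (wt : V → V → R) (l : List V) : R :=
  ((l.zip l.tail).map fun p => wt p.1 p.2).prod

/-- A family of paths is (vertex-)disjoint if no two distinct members share a vertex. -/
def PairwiseDisjointPaths {V : Type*} {n : ℕ} (P : Fin n → List V) : Prop :=
  ∀ i j : Fin n, i ≠ j → ∀ v : V, v ∈ P i → v ∉ P j

set_option linter.unusedSectionVars false
set_option linter.unnecessarySimpa false
set_option linter.unusedVariables false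

namespace LGV
variable {V : Type*} [DecidableEq V] {R : Type*} [CommRing R]

def preL (v : V) (l : List V) : List V := l.takeWhile (fun x => x ≠ v)
def sufL (v : V) (l : List V) : List V := l.dropWhile (fun x => x ≠ v)

lemma preL_append_sufL (v : V) (l : List V) : preL v l ++ sufL v l = l :=
  List.takeWhile_append_dropWhile ..

lemma mem_preL_ne {v x : V} {l : List V} (h : x ∈ preL v l) : x ≠ v := by
  have := List.mem_takeWhile_imp h
  simpa using this

lemma sufL_eq {v : V} {l : List V} (hv : v ∈ l) : ∃ r, sufL v l = v :: r := by
  have hne : sufL v l ≠ [] := by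
    intro h
    have := List.dropWhile_eq_nil_iff.mp h v hv
    simpa using this
  have hhead : ((sufL v l).head hne) = v := by
    have := List.head_dropWhile_not (fun x => decide (x ≠ v)) hne
    rw [decide_eq_false_iff_not, not_not] at this
    exact this
  refine ⟨(sufL v l).tail, ?_⟩
  conv_lhs => rw [← List.cons_head_tail hne]
  rw [hhead]

lemma preL_of {v : V} {t : List V} (r : List V) (h : ∀ x ∈ t, x ≠ v) :
    preL v (t ++ v :: r) = t := by
  induction t with
  | nil => simp [preL, List.takeWhile]
  | cons a t ih =>
    have ha : a ≠ v := h a (by simp)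
    have ih' := ih (fun x hx => h x (by simp [hx]))
    show List.takeWhile _ (a :: (t ++ v :: r)) = _
    rw [List.takeWhile_cons_of_pos (by simpa using ha)]
    exact congrArg (List.cons a) ih'

lemma sufL_of {v : V} {t : List V} (r : List V) (h : ∀ x ∈ t, x ≠ v) :
    sufL v (t ++ v :: r) = v :: r := by
  induction t with
  | nil => simp [sufL, List.dropWhile]
  | cons a t ih =>
    have ha : a ≠ v := h a (by simp)
    have ih' := ih (fun x hx => h x (by simp [hx]))
    show List.dropWhile _ (a :: (t ++ v :: r)) = _
    rw [List.dropWhile_cons_of_pos (by simpa using ha)]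
    exact ih'

lemma split_eq {v : V} {l : List V} (hv : v ∈ l) :
    ∃ r, l = preL v l ++ v :: r ∧ sufL v l = v :: r := by
  obtain ⟨r, hr⟩ := sufL_eq hv
  exact ⟨r, by rw [← hr, preL_append_sufL], hr⟩

lemma nodup_sublist_pair {u w : V} : ∀ {l : List V}, l.Nodup →
    [u, w].Sublist l → [w, u].Sublist l → u = w := by
  intro l
  induction l with
  | nil => intro _ h _; exact absurd h (by simp)
  | cons a l ih =>
    intro hnd h1 h2
    rw [List.nodup_cons] at hnd
    cases h1 with
    | cons _ h1' =>
      cases h2 with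
      | cons _ h2' => exact ih hnd.2 h1' h2'
      | cons_cons _ h2' => exact absurd (h1'.subset (by simp)) hnd.1
    | cons_cons _ h1' =>
      cases h2 with
      | cons _ h2' => exact absurd (h2'.subset (by simp)) hnd.1
      | cons_cons _ h2' => rfl

lemma chain'_mix {E : V → V → Prop} {t r t' r' : List V} {v : V}
    (h1 : (t ++ v :: r).Chain' E) (h2 : (t' ++ v :: r').Chain' E) :
    (t ++ v :: r').Chain' E := by
  simp only [List.Chain'] at h1 h2 ⊢
  rw [List.isChain_append] at h1 h2 ⊢
  refine ⟨h1.1, h2.2.1, ?_⟩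
  simpa using h1.2.2

lemma head?_append_cons (t : List V) (v : V) (r r' : List V) :
    (t ++ v :: r').head? = (t ++ v :: r).head? := by
  cases t <;> simp

lemma getLast?_append_cons' (t : List V) (v : V) (r : List V) :
    (t ++ v :: r).getLast? = (v :: r).getLast? :=
  List.getLast?_append_cons t v r

/-- The data of a "first intersection" of the path family `P`. -/
structure Spec {n : ℕ} (P : Fin n → List V) (i : Fin n) (v : V) (j : Fin n) : Prop where
  ne : j ≠ i
  memi : v ∈ P i
  memj : v ∈ P j
  imin : ∀ i' < i, ∀ j', j' ≠ i' → ∀ w ∈ P i', w ∉ P j'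
  vfirst : ∀ w ∈ preL v (P i), ∀ j', j' ≠ i → w ∉ P j'
  jmin : ∀ j' < j, j' ≠ i → v ∉ P j'

lemma Spec.not_disjoint {n : ℕ} {P : Fin n → List V} {i v j} (h : Spec P i v j) :
    ¬ PairwiseDisjointPaths P := fun hD => hD j i h.ne v h.memj h.memi

lemma Spec.lt {n : ℕ} {P : Fin n → List V} {i v j} (h : Spec P i v j) : i < j := by
  rcases lt_trichotomy i j with hlt | he | hlt
  · exact hlt
  · exact absurd he.symm h.ne
  · exact absurd h.memi (h.imin j hlt i (fun hh => h.ne hh.symm) v h.memj)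

open Classical in
lemma exists_spec {n : ℕ} {P : Fin n → List V}
    (h : ¬ PairwiseDisjointPaths P) : ∃ t : Fin n × V × Fin n, Spec P t.1 t.2.1 t.2.2 := by
  classical
  unfold PairwiseDisjointPaths at h
  push_neg at h
  set I : Finset (Fin n) := Finset.univ.filter (fun i => ∃ j, j ≠ i ∧ ∃ v ∈ P i, v ∈ P j) with hI
  have hIne : I.Nonempty := by
    obtain ⟨i, j, hij, v, hvi, hvj⟩ := h
    refine ⟨i, ?_⟩
    simp only [hI, Finset.mem_filter, Finset.mem_univ, true_and]
    exact ⟨j, fun hh => hij hh.symm, v, hvi, hvj⟩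
  set i₀ := I.min' hIne with hi₀
  have hi₀I : i₀ ∈ I := I.min'_mem hIne
  rw [hI, Finset.mem_filter] at hi₀I
  obtain ⟨-, j₁, hj₁, w₁, hw₁i, hw₁j⟩ := hi₀I
  set Q : V → Prop := fun x => ∃ j, j ≠ i₀ ∧ x ∈ P j with hQ
  set p : V → Bool := fun x => !decide (Q x) with hp
  have hdne : (P i₀).dropWhile p ≠ [] := by
    intro hnil
    have := List.dropWhile_eq_nil_iff.mp hnil w₁ hw₁i
    rw [hp] at this
    simp only [Bool.not_eq_true', decide_eq_false_iff_not] at this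
    exact this ⟨j₁, hj₁, hw₁j⟩
  set v := ((P i₀).dropWhile p).head hdne with hv
  have hQv : Q v := by
    have h1 : (!decide (Q v)) = false := List.head_dropWhile_not p hdne
    simpa using h1
  have hvmem : v ∈ P i₀ := (List.dropWhile_sublist _).subset (List.head_mem hdne)
  have htQ : ∀ x ∈ (P i₀).takeWhile p, ¬ Q x := by
    intro x hx
    have := List.mem_takeWhile_imp hx
    rw [hp] at this
    simpa using this
  have hsplit : P i₀ = (P i₀).takeWhile p ++ v :: ((P i₀).dropWhile p).tail := by
    conv_lhs => rw [← List.takeWhile_append_dropWhile (p := p) (l := P i₀)]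
    congr 1
    exact (List.cons_head_tail hdne).symm
  have hpre : preL v (P i₀) = (P i₀).takeWhile p := by
    conv_lhs => rw [hsplit]
    exact preL_of _ (fun x hx hxv => htQ x hx (hxv ▸ hQv))
  obtain ⟨j₂, hj₂, hvj₂⟩ := hQv
  set J : Finset (Fin n) := Finset.univ.filter (fun j => j ≠ i₀ ∧ v ∈ P j) with hJ
  have hJne : J.Nonempty := ⟨j₂, by simp [hJ, hj₂, hvj₂]⟩
  set j₀ := J.min' hJne with hj₀
  have hj₀J : j₀ ∈ J := J.min'_mem hJne
  rw [hJ, Finset.mem_filter] at hj₀J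
  refine ⟨(i₀, v, j₀), hj₀J.2.1, hvmem, hj₀J.2.2, ?_, ?_, ?_⟩
  · intro i' hi' j' hj' w hwi' hwj'
    have : i' ∈ I := by
      rw [hI, Finset.mem_filter]
      exact ⟨Finset.mem_univ _, j', hj', w, hwi', hwj'⟩
    exact absurd (I.min'_le i' this) (not_le.mpr hi')
  · intro w hw j' hj' hwj'
    rw [hpre] at hw
    exact htQ w hw ⟨j', hj', hwj'⟩
  · intro j' hj' hj'i hvj'
    have : j' ∈ J := by rw [hJ, Finset.mem_filter]; exact ⟨Finset.mem_univ _, hj'i, hvj'⟩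
    exact absurd (J.min'_le j' this) (not_le.mpr hj')

lemma spec_unique {n : ℕ} {P : Fin n → List V} (hnd : ∀ k, (P k).Nodup)
    {i v j i' v' j' : _} (h : Spec P i v j) (h' : Spec P i' v' j') :
    i = i' ∧ v = v' ∧ j = j' := by
  have hii : i = i' := by
    rcases lt_trichotomy i i' with hlt | he | hlt
    · exact absurd h.memj (h'.imin i hlt j h.ne v h.memi)
    · exact he
    · exact absurd h'.memj (h.imin i' hlt j' h'.ne v' h'.memi)
  subst hii
  have key : ∀ (v₁ v₂ : V) (j₁ j₂ : Fin n), Spec P i v₁ j₁ → Spec P i v₂ j₂ →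
      v₂ ≠ v₁ → [v₁, v₂].Sublist (P i) := by
    intro v₁ v₂ j₁ j₂ g₁ g₂ hne
    have hv₂not : v₂ ∉ preL v₁ (P i) := fun hmem =>
      g₁.vfirst v₂ hmem j₂ g₂.ne g₂.memj
    obtain ⟨r, hPi, hs⟩ := split_eq g₁.memi
    have : v₂ ∈ P i := g₂.memi
    rw [hPi] at this
    rcases List.mem_append.mp this with hc | hc
    · exact absurd hc hv₂not
    · rcases List.mem_cons.mp hc with hc' | hc'
      · exact absurd hc' hne
      · refine List.Sublist.trans ?_ (hPi ▸ List.sublist_append_right _ _)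
        exact (List.singleton_sublist.mpr hc').cons₂ v₁
  have hvv : v = v' := by
    by_contra hne
    have s1 := key v v' j j' h h' (Ne.symm hne)
    have s2 := key v' v j' j h' h hne
    exact hne (nodup_sublist_pair (hnd i) s1 s2)
  subst hvv
  have hjj : j = j' := by
    rcases lt_trichotomy j j' with hlt | he | hlt
    · exact absurd h.memj (h'.jmin j hlt h.ne)
    · exact he
    · exact absurd h'.memj (h.jmin j' hlt h'.ne)
  exact ⟨rfl, rfl, hjj⟩

/-- Tail-swap of the paths `P i` and `P j` at the vertex `v`. -/
def swapped {n : ℕ} (P : Fin n → List V) (i : Fin n) (v : V) (j : Fin n) : Fin n → List V :=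
  Function.update (Function.update P i (preL v (P i) ++ sufL v (P j))) j
    (preL v (P j) ++ sufL v (P i))

lemma swapped_apply_i {n : ℕ} {P : Fin n → List V} {i : Fin n} {v : V} {j : Fin n}
    (hij : i ≠ j) : swapped P i v j i = preL v (P i) ++ sufL v (P j) := by
  rw [swapped, Function.update_of_ne hij, Function.update_self]

lemma swapped_apply_j {n : ℕ} {P : Fin n → List V} {i : Fin n} {v : V} {j : Fin n} :
    swapped P i v j j = preL v (P j) ++ sufL v (P i) := by
  rw [swapped, Function.update_self]

lemma swapped_apply_other {n : ℕ} {P : Fin n → List V} {i : Fin n} {v : V} {j k : Fin n}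
    (hki : k ≠ i) (hkj : k ≠ j) : swapped P i v j k = P k := by
  rw [swapped, Function.update_of_ne hkj, Function.update_of_ne hki]

lemma mem_swapped {n : ℕ} {P : Fin n → List V} {i : Fin n} {v : V} {j k : Fin n} {x : V}
    (hij : i ≠ j) (hx : x ∈ swapped P i v j k) : x ∈ P k ∨ x ∈ P i ∨ x ∈ P j := by
  rcases eq_or_ne k i with rfl | hki
  · rw [swapped_apply_i hij] at hx
    rcases List.mem_append.mp hx with hc | hc
    · exact Or.inr (Or.inl ((preL_append_sufL v (P k)) ▸ List.mem_append.mpr (Or.inl hc)))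
    · exact Or.inr (Or.inr ((preL_append_sufL v (P j)) ▸ List.mem_append.mpr (Or.inr hc)))
  rcases eq_or_ne k j with rfl | hkj
  · rw [swapped_apply_j] at hx
    rcases List.mem_append.mp hx with hc | hc
    · exact Or.inr (Or.inr ((preL_append_sufL v (P k)) ▸ List.mem_append.mpr (Or.inl hc)))
    · exact Or.inr (Or.inl ((preL_append_sufL v (P i)) ▸ List.mem_append.mpr (Or.inr hc)))
  · rw [swapped_apply_other hki hkj] at hx
    exact Or.inl hx

lemma chain'_nodup {E : V → V → Prop} (hacyc : ¬ ∃ v : V, Relation.TransGen E v v)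
    {l : List V} (hl : l.Chain' E) : l.Nodup := by
  rw [List.nodup_iff_sublist]
  intro a hsub
  have h2 : l.Chain' (Relation.TransGen E) := hl.imp fun _ _ => Relation.TransGen.single
  have := h2.sublist hsub
  rw [List.isChain_cons_cons] at this
  exact hacyc ⟨a, this.1⟩

lemma pathWeight_cons_cons (wt : V → V → R) (a b : V) (l : List V) :
    pathWeight wt (a :: b :: l) = wt a b * pathWeight wt (b :: l) := rfl

lemma pathWeight_append (wt : V → V → R) (xs : List V) (v : V) (ys : List V) :
    pathWeight wt (xs ++ v :: ys) = pathWeight wt (xs ++ [v]) * pathWeight wt (v :: ys) := by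
  induction xs with
  | nil =>
    simp only [List.nil_append]
    show pathWeight wt (v :: ys) = pathWeight wt [v] * pathWeight wt (v :: ys)
    simp [pathWeight]
  | cons a xs ih =>
    cases xs with
    | nil =>
      simp only [List.cons_append, List.nil_append]
      rw [pathWeight_cons_cons, pathWeight_cons_cons]
      rw [show pathWeight wt [v] = 1 from by simp [pathWeight]]
      ring
    | cons a' xs' =>
      simp only [List.cons_append] at *
      rw [pathWeight_cons_cons, pathWeight_cons_cons, ih]
      ring

section Swap
variable {n : ℕ} {P : Fin n → List V} {i : Fin n} {v : V} {j : Fin n}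

lemma preL_swap {l : List V} (hvj : v ∈ P j) :
    preL v (preL v l ++ sufL v (P j)) = preL v l := by
  obtain ⟨rj, hsj⟩ := sufL_eq hvj
  rw [hsj]
  exact preL_of _ (fun x hx => mem_preL_ne hx)

lemma sufL_swap {l : List V} (hvj : v ∈ P j) :
    sufL v (preL v l ++ sufL v (P j)) = sufL v (P j) := by
  obtain ⟨rj, hsj⟩ := sufL_eq hvj
  rw [hsj]
  exact sufL_of _ (fun x hx => mem_preL_ne hx)

lemma swapped_swapped (hij : i ≠ j) (hvi : v ∈ P i) (hvj : v ∈ P j) :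
    swapped (swapped P i v j) i v j = P := by
  funext k
  rcases eq_or_ne k i with rfl | hki
  · rw [swapped_apply_i hij, swapped_apply_i hij, swapped_apply_j,
      preL_swap hvj, sufL_swap hvi, preL_append_sufL]
  rcases eq_or_ne k j with rfl | hkj
  · rw [swapped_apply_j, swapped_apply_i hij, swapped_apply_j,
      preL_swap hvi, sufL_swap hvj, preL_append_sufL]
  · rw [swapped_apply_other hki hkj, swapped_apply_other hki hkj]

lemma Spec.mem_swapped_i (h : Spec P i v j) : v ∈ swapped P i v j i := by
  obtain ⟨rj, hsj⟩ := sufL_eq h.memj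
  rw [swapped_apply_i h.lt.ne, hsj]
  simp

lemma Spec.mem_swapped_j (h : Spec P i v j) : v ∈ swapped P i v j j := by
  obtain ⟨ri, hsi⟩ := sufL_eq h.memi
  rw [swapped_apply_j, hsi]
  simp

lemma Spec.swapped_spec (hnd : ∀ k, (P k).Nodup) (h : Spec P i v j) :
    Spec (swapped P i v j) i v j := by
  have hij : i ≠ j := h.lt.ne
  have hji : j ≠ i := h.ne
  refine ⟨h.ne, h.mem_swapped_i, h.mem_swapped_j, ?_, ?_, ?_⟩
  · -- imin
    intro i' hi' j' hj' w hwi' hwj'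
    have hi'i : i' ≠ i := hi'.ne
    have hi'j : i' ≠ j := (hi'.trans h.lt).ne
    rw [swapped_apply_other hi'i hi'j] at hwi'
    rcases mem_swapped hij hwj' with hc | hc | hc
    · exact h.imin i' hi' j' hj' w hwi' hc
    · exact h.imin i' hi' i (Ne.symm hi'i) w hwi' hc
    · exact h.imin i' hi' j (Ne.symm hi'j) w hwi' hc
  · -- vfirst
    intro w hw j' hj' hwj'
    rw [swapped_apply_i hij, preL_swap h.memj] at hw
    have hwPi : w ∉ P j := h.vfirst w hw j hji
    rcases eq_or_ne j' j with rfl | hj'j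
    · rw [swapped_apply_j] at hwj'
      rcases List.mem_append.mp hwj' with hc | hc
      · exact hwPi ((preL_append_sufL v (P j')) ▸ List.mem_append.mpr (Or.inl hc))
      · -- w ∈ sufL v (P i), but w ∈ preL v (P i) and P i nodup
        obtain ⟨ri, hPi, hsi⟩ := split_eq h.memi
        have hnd' := hnd i
        rw [hPi, List.nodup_append] at hnd'
        rw [hsi] at hc
        exact hnd'.2.2 w hw w hc rfl
    · rw [swapped_apply_other hj' hj'j] at hwj'
      exact h.vfirst w hw j' hj' hwj'
  · -- jmin
    intro j' hj' hj'i hvj'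
    have hj'j : j' ≠ j := hj'.ne
    rw [swapped_apply_other hj'i hj'j] at hvj'
    exact h.jmin j' hj' hj'i hvj'

lemma isPath_swapped {E : V → V → Prop} (hacyc : ¬ ∃ w : V, Relation.TransGen E w w)
    {b c : Fin n → V} {σ : Equiv.Perm (Fin n)}
    (hP : ∀ k, IsPath E (b k) (c (σ k)) (P k)) (h : Spec P i v j) (k : Fin n) :
    IsPath E (b k) (c ((σ * Equiv.swap i j) k)) (swapped P i v j k) := by
  have hij : i ≠ j := h.lt.ne
  obtain ⟨ri, hPi, hsi⟩ := split_eq h.memi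
  obtain ⟨rj, hPj, hsj⟩ := split_eq h.memj
  obtain ⟨hc1, hh1, hl1, -⟩ := hP i
  obtain ⟨hc2, hh2, hl2, -⟩ := hP j
  rcases eq_or_ne k i with rfl | hki
  · rw [swapped_apply_i hij, hsj]
    have hswap : (σ * Equiv.swap k j) k = σ j := by
      rw [Equiv.Perm.mul_apply, Equiv.swap_apply_left]
    rw [hswap]
    rw [hPi] at hc1 hh1
    rw [hPj] at hc2 hl2
    have hchain : (preL v (P k) ++ v :: rj).Chain' E := chain'_mix hc1 hc2
    refine ⟨hchain, ?_, ?_, chain'_nodup hacyc hchain⟩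
    · exact (head?_append_cons _ v ri rj).trans hh1
    · exact (getLast?_append_cons' _ v rj).trans
        ((getLast?_append_cons' (preL v (P j)) v rj).symm.trans hl2)
  rcases eq_or_ne k j with rfl | hkj
  · rw [swapped_apply_j, hsi]
    have hswap : (σ * Equiv.swap i k) k = σ i := by
      rw [Equiv.Perm.mul_apply, Equiv.swap_apply_right]
    rw [hswap]
    rw [hPi] at hc1 hl1
    rw [hPj] at hc2 hh2
    have hchain : (preL v (P k) ++ v :: ri).Chain' E := chain'_mix hc2 hc1
    refine ⟨hchain, ?_, ?_, chain'_nodup hacyc hchain⟩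
    · exact (head?_append_cons _ v rj ri).trans hh2
    · exact (getLast?_append_cons' _ v ri).trans
        ((getLast?_append_cons' (preL v (P i)) v ri).symm.trans hl1)
  · rw [swapped_apply_other hki hkj]
    have hswap : (σ * Equiv.swap i j) k = σ k := by
      rw [Equiv.Perm.mul_apply, Equiv.swap_apply_of_ne_of_ne hki hkj]
    rw [hswap]
    exact hP k

lemma prod_swapped_weight (wt : V → V → R) (hij : i ≠ j) (hvi : v ∈ P i) (hvj : v ∈ P j) :
    ∏ k, pathWeight wt (swapped P i v j k) = ∏ k, pathWeight wt (P k) := by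
  classical
  have hjmem : j ∈ Finset.univ.erase i := Finset.mem_erase.mpr ⟨hij.symm, Finset.mem_univ j⟩
  obtain ⟨ri, hPi, hsi⟩ := split_eq hvi
  obtain ⟨rj, hPj, hsj⟩ := split_eq hvj
  have key : pathWeight wt (swapped P i v j i) * pathWeight wt (swapped P i v j j)
      = pathWeight wt (P i) * pathWeight wt (P j) := by
    rw [swapped_apply_i hij, swapped_apply_j, hsi, hsj,
      pathWeight_append wt (preL v (P i)) v rj, pathWeight_append wt (preL v (P j)) v ri]
    conv_rhs => rw [hPi, hPj, pathWeight_append wt (preL v (P i)) v ri,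
      pathWeight_append wt (preL v (P j)) v rj]
    ring
  rw [← Finset.mul_prod_erase _ _ (Finset.mem_univ i), ← Finset.mul_prod_erase _ _ hjmem]
  conv_rhs => rw [← Finset.mul_prod_erase _ _ (Finset.mem_univ i),
    ← Finset.mul_prod_erase _ _ hjmem]
  rw [← mul_assoc, ← mul_assoc, key]
  congr 1
  refine Finset.prod_congr rfl fun k hk => ?_
  rw [Finset.mem_erase, Finset.mem_erase] at hk
  rw [swapped_apply_other hk.2.1 hk.1]

end Swap

lemma pathSet_finite [Fintype V] (E : V → V → Prop) (a b' : V) :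
    {l : List V | IsPath E a b' l}.Finite :=
  (List.finite_length_le V (Fintype.card V)).subset fun _ hl => hl.2.2.2.length_le_card

open Classical in
noncomputable def move {n : ℕ} (x : Σ _ : Equiv.Perm (Fin n), Fin n → List V) :
    Σ _ : Equiv.Perm (Fin n), Fin n → List V :=
  if h : ∃ t : Fin n × V × Fin n, Spec x.2 t.1 t.2.1 t.2.2 then
    ⟨x.1 * Equiv.swap (Classical.choose h).1 (Classical.choose h).2.2,
     swapped x.2 (Classical.choose h).1 (Classical.choose h).2.1 (Classical.choose h).2.2⟩
  else x

lemma move_spec {E : V → V → Prop} (hacyc : ¬ ∃ w : V, Relation.TransGen E w w)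
    {n : ℕ} {b c : Fin n → V} (wt : V → V → R)
    {x : Σ _ : Equiv.Perm (Fin n), Fin n → List V}
    (hP : ∀ k, IsPath E (b k) (c (x.1 k)) (x.2 k)) (hnd : ¬ PairwiseDisjointPaths x.2) :
    (∀ k, IsPath E (b k) (c ((move x).1 k)) ((move x).2 k)) ∧
      ¬ PairwiseDisjointPaths (move x).2 ∧
      (move x).1 ≠ x.1 ∧
      Equiv.Perm.sign (move x).1 = - Equiv.Perm.sign x.1 ∧
      (∏ k, pathWeight wt ((move x).2 k) = ∏ k, pathWeight wt (x.2 k)) ∧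
      move (move x) = x := by
  classical
  have hex : ∃ t : Fin n × V × Fin n, Spec x.2 t.1 t.2.1 t.2.2 := exists_spec hnd
  have hnodup : ∀ k, (x.2 k).Nodup := fun k => (hP k).2.2.2
  set t := Classical.choose hex with ht
  have hspec : Spec x.2 t.1 t.2.1 t.2.2 := Classical.choose_spec hex
  have hmove : move x = ⟨x.1 * Equiv.swap t.1 t.2.2,
      swapped x.2 t.1 t.2.1 t.2.2⟩ := by
    simp only [move]
    rw [dif_pos hex]
  have hij : t.1 ≠ t.2.2 := hspec.lt.ne
  have hP' : ∀ k, IsPath E (b k) (c ((x.1 * Equiv.swap t.1 t.2.2) k))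
      (swapped x.2 t.1 t.2.1 t.2.2 k) := isPath_swapped hacyc hP hspec
  have hspec' : Spec (swapped x.2 t.1 t.2.1 t.2.2) t.1 t.2.1 t.2.2 :=
    hspec.swapped_spec hnodup
  refine ⟨?_, ?_, ?_, ?_, ?_, ?_⟩
  · intro k; rw [hmove]; exact hP' k
  · rw [hmove]; exact hspec'.not_disjoint
  · rw [hmove]
    intro hcontr
    simp only at hcontr
    have h1 : x.1 * Equiv.swap t.1 t.2.2 = x.1 * 1 := by rw [mul_one]; exact hcontr
    have h2 := mul_left_cancel h1
    exact hij (Equiv.swap_eq_one_iff.mp h2)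
  · rw [hmove]
    show Equiv.Perm.sign (x.1 * Equiv.swap t.1 t.2.2) = _
    rw [map_mul, Equiv.Perm.sign_swap hij, mul_neg_one]
  · rw [hmove]
    exact prod_swapped_weight wt hij hspec.memi hspec.memj
  · rw [hmove]
    have hnodup' : ∀ k, (swapped x.2 t.1 t.2.1 t.2.2 k).Nodup := fun k => (hP' k).2.2.2
    have hexy : ∃ t' : Fin n × V × Fin n,
        Spec (swapped x.2 t.1 t.2.1 t.2.2) t'.1 t'.2.1 t'.2.2 := ⟨t, hspec'⟩
    simp only [move]
    rw [dif_pos hexy]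
    obtain ⟨e1, e2, e3⟩ := spec_unique hnodup' (Classical.choose_spec hexy) hspec'
    rw [e1, e2, e3, mul_assoc, Equiv.swap_mul_self, mul_one,
      swapped_swapped hij hspec.memi hspec.memj]

end LGV

open scoped BigOperators

/-- Lindström–Gessel–Viennot lemma for a planar acyclic weighted network: if `X` is the
path matrix from sources `b` to sinks `c`, and (as planarity forces) every
vertex-disjoint path family joins `b i` to `c i`, then `det X` is the sum over all
vertex-disjoint path families `(p_1, …, p_n)`, `p_i : b i → c i`, of the products of
the path weights. -/
theorem stmt_9 {V : Type*} [Fintype V] [DecidableEq V] {R : Type*} [CommRing R]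
    (E : V → V → Prop) (wt : V → V → R) (n : ℕ) (b c : Fin n → V)
    (hacyc : ¬ ∃ v : V, Relation.TransGen E v v)
    (hb : Function.Injective b) (hc : Function.Injective c)
    (hplanar : ∀ (σ : Equiv.Perm (Fin n)) (P : Fin n → List V),
      (∀ i, IsPath E (b i) (c (σ i)) (P i)) → PairwiseDisjointPaths P → σ = 1)
    (X : Matrix (Fin n) (Fin n) R)
    (hX : ∀ i j, X i j = ∑ᶠ l ∈ {l : List V | IsPath E (b i) (c j) l}, pathWeight wt l) :
    X.det = ∑ᶠ P ∈ {P : Fin n → List V |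
        (∀ i, IsPath E (b i) (c i) (P i)) ∧ PairwiseDisjointPaths P},
      ∏ i : Fin n, pathWeight wt (P i) := by
  classical
  have hfin : ∀ i j : Fin n, {l : List V | IsPath E (b i) (c j) l}.Finite :=
    fun i j => LGV.pathSet_finite E (b i) (c j)
  set PF : Fin n → Fin n → Finset (List V) := fun i j => (hfin i j).toFinset with hPF
  have hmemPF : ∀ (i j : Fin n) (l : List V), l ∈ PF i j ↔ IsPath E (b i) (c j) l := by
    intro i j l
    simp [hPF, Set.Finite.mem_toFinset]
  have hX' : ∀ i j, X i j = ∑ l ∈ PF i j, pathWeight wt l := by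
    intro i j
    rw [hX i j, ← (hfin i j).coe_toFinset, finsum_mem_coe_finset]
  -- the RHS as a finite sum
  have hDfin : {P : Fin n → List V |
      (∀ i, IsPath E (b i) (c i) (P i)) ∧ PairwiseDisjointPaths P}.Finite := by
    refine Set.Finite.subset (Set.Finite.pi (fun i => hfin i i)) ?_
    intro P hP
    exact fun i _ => hP.1 i
  rw [← hDfin.coe_toFinset, finsum_mem_coe_finset]
  -- expand the determinant
  have hdet1 : X.det = ∑ σ : Equiv.Perm (Fin n),
      Equiv.Perm.sign σ • ∏ i, X i (σ i) := by
    rw [← Matrix.det_transpose X, Matrix.det_apply]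
    rfl
  have hdet2 : X.det = ∑ σ : Equiv.Perm (Fin n),
      ∑ P ∈ Fintype.piFinset (fun i => PF i (σ i)),
        Equiv.Perm.sign σ • ∏ i, pathWeight wt (P i) := by
    rw [hdet1]
    refine Finset.sum_congr rfl fun σ _ => ?_
    rw [← Finset.smul_sum]
    congr 1
    rw [show ∏ i, X i (σ i) = ∏ i, ∑ l ∈ PF i (σ i), pathWeight wt l from
      Finset.prod_congr rfl fun i _ => hX' i (σ i)]
    exact Finset.prod_univ_sum _ _
  set B : Finset ((_ : Equiv.Perm (Fin n)) × (Fin n → List V)) :=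
    Finset.univ.sigma (fun σ => Fintype.piFinset (fun i => PF i (σ i))) with hB
  set F : ((_ : Equiv.Perm (Fin n)) × (Fin n → List V)) → R :=
    fun x => Equiv.Perm.sign x.1 • ∏ i, pathWeight wt (x.2 i) with hF
  have hmemB : ∀ x : ((_ : Equiv.Perm (Fin n)) × (Fin n → List V)),
      x ∈ B ↔ ∀ k, IsPath E (b k) (c (x.1 k)) (x.2 k) := by
    intro x
    rw [hB, Finset.mem_sigma, Fintype.mem_piFinset]
    constructor
    · intro h k
      exact (hmemPF k (x.1 k) (x.2 k)).mp (h.2 k)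
    · intro h
      exact ⟨Finset.mem_univ _, fun k => (hmemPF k (x.1 k) (x.2 k)).mpr (h k)⟩
  have hdet3 : X.det = ∑ x ∈ B, F x := by
    rw [hdet2, hB]
    exact Finset.sum_sigma' _ _ _
  rw [hdet3, ← Finset.sum_filter_add_sum_filter_not B
    (fun x => PairwiseDisjointPaths x.2) F]
  have hbad : ∑ x ∈ B.filter (fun x => ¬ PairwiseDisjointPaths x.2), F x = 0 := by
    refine Finset.sum_involution (fun x _ => LGV.move x) ?_ ?_ ?_ ?_
    · intro a ha
      rw [Finset.mem_filter] at ha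
      obtain ⟨-, hsign, hw, -⟩ := (LGV.move_spec hacyc wt ((hmemB a).mp ha.1) ha.2).2.2
      simp only [hF]
      rw [hsign, hw, Units.smul_def, Units.smul_def, Units.val_neg, neg_zsmul]
      exact add_neg_cancel _
    · intro a ha _
      rw [Finset.mem_filter] at ha
      have h1 := (LGV.move_spec hacyc wt ((hmemB a).mp ha.1) ha.2).2.2.1
      intro hcontr
      exact h1 (congrArg Sigma.fst hcontr)
    · intro a ha
      rw [Finset.mem_filter] at ha ⊢
      obtain ⟨hpath, hndisj, -⟩ := LGV.move_spec hacyc wt ((hmemB a).mp ha.1) ha.2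
      exact ⟨(hmemB _).mpr hpath, hndisj⟩
    · intro a ha
      rw [Finset.mem_filter] at ha
      exact (LGV.move_spec hacyc wt ((hmemB a).mp ha.1) ha.2).2.2.2.2.2
  rw [hbad, add_zero]
  refine Finset.sum_bij (fun x _ => x.2) ?_ ?_ ?_ ?_
  · intro a ha
    rw [Finset.mem_filter] at ha
    have hpath := (hmemB a).mp ha.1
    have hone : a.1 = 1 := hplanar a.1 a.2 hpath ha.2
    rw [Set.Finite.mem_toFinset]
    refine ⟨fun i => ?_, ha.2⟩
    have := hpath i
    rwa [hone, Equiv.Perm.one_apply] at this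
  · intro a ha a' ha' h
    rw [Finset.mem_filter] at ha ha'
    have hone : a.1 = 1 := hplanar a.1 a.2 ((hmemB a).mp ha.1) ha.2
    have hone' : a'.1 = 1 := hplanar a'.1 a'.2 ((hmemB a').mp ha'.1) ha'.2
    exact Sigma.ext (hone.trans hone'.symm) (heq_of_eq h)
  · intro P hP
    rw [Set.Finite.mem_toFinset] at hP
    refine ⟨⟨1, P⟩, ?_, rfl⟩
    rw [Finset.mem_filter]
    constructor
    · rw [hmemB]
      intro k
      simpa using hP.1 k
    · exact hP.2
  · intro a ha
    rw [Finset.mem_filter] at ha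
    have hone : a.1 = 1 := hplanar a.1 a.2 ((hmemB a).mp ha.1) ha.2
    rw [hF]
    simp only
    rw [hone]
    simp
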